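/- Let V = ℝ⁴ with the Chevalley–Eilenberg differential determined by de¹ = 0, de² = 0, de³ = 0, de⁴ = e¹∧e². Then every closed 2-form Ω ∈ Λ²V* (i.e. every Ω with dΩ = 0) satisfies Ω ∧ e¹ ∧ e² = 0. -/

import Mathlib

/-- The basis covectors `e¹, …, e⁴` of `V*`, viewed as degree-one elements of the
exterior algebra `Λ(V*)`. -/
noncomputable def E (i : Fin 4) : ExteriorAlgebra ℝ (Fin 4 → ℝ) :=
  ExteriorAlgebra.ι ℝ (Pi.single i 1)

/-- The Chevalley–Eilenberg differential on basis covectors for `Nil³ × ℝ`: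
`de¹ = 0`, `de² = 0`, `de³ = 0`, `de⁴ = e¹∧e²`. -/
noncomputable def dE : Fin 4 → ExteriorAlgebra ℝ (Fin 4 → ℝ)
  | 0 => 0
  | 1 => 0
  | 2 => 0
  | 3 => E 0 * E 1

/-- The 2-form `∑_{i<j} c i j e^i ∧ e^j` with coefficients `c`. -/
noncomputable def twoForm (c : Fin 4 → Fin 4 → ℝ) : ExteriorAlgebra ℝ (Fin 4 → ℝ) :=
  ∑ i : Fin 4, ∑ j ∈ Finset.univ.filter (fun j => i < j), c i j • (E i * E j)

/-- The Chevalley–Eilenberg differential of the 2-form `∑_{i<j} c i j e^i ∧ e^j`,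
extended from degree one by the Leibniz rule `d(α∧β) = dα∧β - α∧dβ`. -/
noncomputable def dTwoForm (c : Fin 4 → Fin 4 → ℝ) : ExteriorAlgebra ℝ (Fin 4 → ℝ) :=
  ∑ i : Fin 4, ∑ j ∈ Finset.univ.filter (fun j => i < j),
    c i j • (dE i * E j - E i * dE j)

lemma E_sq (i : Fin 4) : E i * E i = 0 := ExteriorAlgebra.ι_sq_zero _

lemma E_swap (i j : Fin 4) : E i * E j = -(E j * E i) :=
  eq_neg_of_add_eq_zero_left (ExteriorAlgebra.ι_add_mul_swap _ _)

lemma E_dup (i : Fin 4) (z : ExteriorAlgebra ℝ (Fin 4 → ℝ)) : E i * (E i * z) = 0 := by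
  rw [← mul_assoc, E_sq, zero_mul]

lemma h01 : E 0 * (E 0 * E 1) = 0 := E_dup 0 (E 1)

lemma h11 : E 1 * (E 0 * E 1) = 0 := by
  rw [← mul_assoc, E_swap 1 0, neg_mul, mul_assoc, E_sq, mul_zero, neg_zero]

/-- Auxiliary family of alternating maps: the determinant in degree 4, zero elsewhere. -/
noncomputable def famDet : ∀ n : ℕ, (Fin 4 → ℝ) [⋀^Fin n]→ₗ[ℝ] ℝ
  | 4 => Matrix.detRowAlternating
  | _ => 0

lemma det_aux : (Matrix.detRowAlternating (R := ℝ) (n := Fin 4))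
    ![Pi.single 2 1, Pi.single 0 1, Pi.single 1 1, Pi.single 3 1] = 1 := by
  have h : (Matrix.detRowAlternating (R := ℝ) (n := Fin 4))
      ![Pi.single 2 1, Pi.single 0 1, Pi.single 1 1, Pi.single 3 1]
      = (Matrix.of ![(Pi.single 2 1 : Fin 4 → ℝ), Pi.single 0 1, Pi.single 1 1,
          Pi.single 3 1]).det := rfl
  rw [h, Matrix.det_succ_row_zero]
  simp [Fin.sum_univ_four, Matrix.det_fin_three, Matrix.submatrix, Pi.single_apply, Fin.succAbove]

lemma famDet4 : famDet 4 = Matrix.detRowAlternating := rfl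

lemma ιMulti_aux : E 2 * (E 0 * (E 1 * E 3)) =
    ExteriorAlgebra.ιMulti ℝ 4 ![Pi.single 2 1, Pi.single 0 1, Pi.single 1 1, Pi.single 3 1] := by
  simp [ExteriorAlgebra.ιMulti_apply, E, List.ofFn_succ, mul_assoc]

set_option maxHeartbeats 1000000 in
/-- On the Lie algebra of `Nil³ × ℝ` (structure equations `de¹ = de² = de³ = 0`,
`de⁴ = e¹∧e²`), every closed 2-form `Ω` satisfies `Ω ∧ e¹ ∧ e² = 0`; that is, the
fibration `π_{xy}` of the Kodaira–Thurston manifold is Lagrangian for every invariant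
symplectic form. -/
theorem lagrangian_fibration (c : Fin 4 → Fin 4 → ℝ)
    (Ω : ExteriorAlgebra ℝ (Fin 4 → ℝ)) (hΩ : Ω = twoForm c)
    (hclosed : dTwoForm c = 0) :
    Ω * (E 0 * E 1) = 0 := by
  -- Step 1: closedness forces `c 2 3 = 0`.
  have hc : c 2 3 • (E 2 * (E 0 * E 1)) = 0 := by
    have h := hclosed
    simp only [dTwoForm, Fin.sum_univ_four, Finset.sum_filter, dE, zero_mul, mul_zero,
      zero_sub, sub_zero, sub_self, smul_zero, smul_neg, add_zero, zero_add,
      Finset.sum_const_zero] at h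
    simp only [show ((0:Fin 4) < 1) = True by simp, show ((0:Fin 4) < 2) = True by simp,
      show ((0:Fin 4) < 3) = True by simp, show ((1:Fin 4) < 2) = True by simp,
      show ((1:Fin 4) < 3) = True by simp, show ((2:Fin 4) < 3) = True by simp,
      show ¬((1:Fin 4) < 1) by simp, show ¬((2:Fin 4) < 1) by simp,
      show ¬((2:Fin 4) < 2) by simp, show ¬((3:Fin 4) < 1) by simp,
      show ¬((3:Fin 4) < 2) by simp, show ¬((3:Fin 4) < 3) by simp,
      show ¬((0:Fin 4) < 0) by simp, show ¬((1:Fin 4) < 0) by simp,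
      show ¬((2:Fin 4) < 0) by simp, show ¬((3:Fin 4) < 0) by simp,
      if_true, if_false, h01, h11, smul_zero, add_zero, zero_add, neg_zero,
      neg_eq_zero] at h
    exact h
  have hc4 : c 2 3 • (E 2 * (E 0 * (E 1 * E 3))) = 0 := by
    have h3 := congrArg (· * E 3) hc
    simp only [smul_mul_assoc, mul_assoc, zero_mul] at h3
    exact h3
  have hc23 : c 2 3 = 0 := by
    have h := congrArg (ExteriorAlgebra.liftAlternating famDet) hc4
    rw [map_smul, ιMulti_aux, ExteriorAlgebra.liftAlternating_apply_ιMulti, famDet4,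
      det_aux] at h
    simpa using h
  -- Step 2: expand `Ω ∧ e¹ ∧ e²`.
  subst hΩ
  have p01 : (E 0 * E 1) * (E 0 * E 1) = 0 := by rw [mul_assoc, h11, mul_zero]
  have p02 : (E 0 * E 2) * (E 0 * E 1) = 0 := by
    rw [E_swap 0 2, neg_mul, mul_assoc, h01, mul_zero, neg_zero]
  have p03 : (E 0 * E 3) * (E 0 * E 1) = 0 := by
    rw [E_swap 0 3, neg_mul, mul_assoc, h01, mul_zero, neg_zero]
  have p12 : (E 1 * E 2) * (E 0 * E 1) = 0 := by
    rw [E_swap 1 2, neg_mul, mul_assoc, h11, mul_zero, neg_zero]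
  have p13 : (E 1 * E 3) * (E 0 * E 1) = 0 := by
    rw [E_swap 1 3, neg_mul, mul_assoc, h11, mul_zero, neg_zero]
  simp only [twoForm, Fin.sum_univ_four, Finset.sum_filter]
  simp only [show ((0:Fin 4) < 1) = True by simp, show ((0:Fin 4) < 2) = True by simp,
    show ((0:Fin 4) < 3) = True by simp, show ((1:Fin 4) < 2) = True by simp,
    show ((1:Fin 4) < 3) = True by simp, show ((2:Fin 4) < 3) = True by simp,
    show ¬((1:Fin 4) < 1) by simp, show ¬((2:Fin 4) < 1) by simp,
    show ¬((2:Fin 4) < 2) by simp, show ¬((3:Fin 4) < 1) by simp,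
    show ¬((3:Fin 4) < 2) by simp, show ¬((3:Fin 4) < 3) by simp,
    show ¬((0:Fin 4) < 0) by simp, show ¬((1:Fin 4) < 0) by simp,
    show ¬((2:Fin 4) < 0) by simp, show ¬((3:Fin 4) < 0) by simp,
    if_true, if_false, add_zero, zero_add, Finset.sum_const_zero]
  simp only [add_mul, smul_mul_assoc, p01, p02, p03, p12, p13, hc23, zero_smul, smul_zero,
    add_zero, zero_add]
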